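/- Suppose U₋₁ : (0,δ)×ℝⁿ → ℝ^d is twice continuously differentiable, U₀, U₁, …, U_n : (0,δ)×ℝⁿ → ℝ^d are continuously differentiable, the tuple (U₋₁, U₀, U₁, …, U_n) satisfies the first-order system (E₋₁), (E₀), (E_a), and the constraint identities U_a = t·∂_a U₋₁ hold on all of (0,δ)×ℝⁿ for each a = 1,…,n. Then u := U₋₁ is a classical solution of the second-order system. -/

import Mathlib

/-- The Fuchsian time derivative `D u = t·∂_t u` for functions of `(t, x) ∈ ℝ × ℝⁿ`. -/
noncomputable def Dop {n d : ℕ} (u : ℝ × (Fin n → ℝ) → Fin d → ℝ)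
    (p : ℝ × (Fin n → ℝ)) : Fin d → ℝ :=
  p.1 • deriv (fun s => u (s, p.2)) p.1

/-- The spatial partial derivative `∂_a u` for functions of `(t, x) ∈ ℝ × ℝⁿ`. -/
noncomputable def pd {n d : ℕ} (a : Fin n) (u : ℝ × (Fin n → ℝ) → Fin d → ℝ)
    (p : ℝ × (Fin n → ℝ)) : Fin d → ℝ :=
  deriv (fun s => u (p.1, Function.update p.2 a s)) (p.2 a)

/-- Appendix A, converse direction of the first-order reduction: if `(U₋₁, U₀, U₁, …, U_n)`
solves the first-order system (E₋₁), (E₀), (E_a) on `(0,δ) × ℝⁿ` and the constraint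
identities `U_a = t·∂_a U₋₁` hold, then `u := U₋₁` is a classical solution of the
second-order system `D²u − 2·Σ_a G⁰ᵃ·t∂_a(Du) − Σ_{a,b} Gᵃᵇ·t²∂_a∂_b u − Du = h`. -/
theorem stmt_10 (n d : ℕ) (hn : 0 < n) (hd : 0 < d) (δ α : ℝ) (hδ : 0 < δ)
    (G0 : Fin n → ℝ × (Fin n → ℝ) → ℝ)
    (G : Fin n → Fin n → ℝ × (Fin n → ℝ) → ℝ)
    (hGsymm : ∀ a b : Fin n, G a b = G b a)
    (h : ℝ × (Fin n → ℝ) → Fin d → ℝ)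
    (Um1 U0 : ℝ × (Fin n → ℝ) → Fin d → ℝ)
    (UA : Fin n → ℝ × (Fin n → ℝ) → Fin d → ℝ)
    (hUm1 : ContDiffOn ℝ 2 Um1 (Set.Ioo (0 : ℝ) δ ×ˢ (Set.univ : Set (Fin n → ℝ))))
    (hU0 : ContDiffOn ℝ 1 U0 (Set.Ioo (0 : ℝ) δ ×ˢ (Set.univ : Set (Fin n → ℝ))))
    (hUA : ∀ a : Fin n,
      ContDiffOn ℝ 1 (UA a) (Set.Ioo (0 : ℝ) δ ×ˢ (Set.univ : Set (Fin n → ℝ))))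
    (hEm1 : ∀ p ∈ Set.Ioo (0 : ℝ) δ ×ˢ (Set.univ : Set (Fin n → ℝ)),
      Dop Um1 p - α • Um1 p - U0 p = 0)
    (hE0 : ∀ p ∈ Set.Ioo (0 : ℝ) δ ×ˢ (Set.univ : Set (Fin n → ℝ)),
      Dop U0 p - ∑ a : Fin n, (2 * G0 a p) • (p.1 • pd a U0 p)
          - ∑ a : Fin n, ∑ b : Fin n, G a b p • (p.1 • pd a (UA b) p)
          - (α * (1 - α)) • Um1 p + (α - 1) • U0 p
        = h p + ∑ a : Fin n, (2 * α * G0 a p) • UA a p)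
    (hEa : ∀ p ∈ Set.Ioo (0 : ℝ) δ ×ˢ (Set.univ : Set (Fin n → ℝ)), ∀ a : Fin n,
      ∑ b : Fin n, G a b p •
        (Dop (UA b) p - p.1 • pd b U0 p - (1 + α) • UA b p) = 0)
    (hconstraint : ∀ p ∈ Set.Ioo (0 : ℝ) δ ×ˢ (Set.univ : Set (Fin n → ℝ)), ∀ a : Fin n,
      UA a p = p.1 • pd a Um1 p) :
    ∀ p ∈ Set.Ioo (0 : ℝ) δ ×ˢ (Set.univ : Set (Fin n → ℝ)),
      Dop (Dop Um1) p - ∑ a : Fin n, (2 * G0 a p) • (p.1 • pd a (Dop Um1) p)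
        - ∑ a : Fin n, ∑ b : Fin n, G a b p • ((p.1) ^ 2 • pd a (pd b Um1) p)
        - Dop Um1 p = h p := by
  intro p hp
  have hSopen : IsOpen (Set.Ioo (0 : ℝ) δ ×ˢ (Set.univ : Set (Fin n → ℝ))) :=
    isOpen_Ioo.prod isOpen_univ
  have hpt : p.1 ∈ Set.Ioo (0 : ℝ) δ := hp.1
  have ht0 : p.1 ≠ 0 := ne_of_gt hpt.1
  -- slice differentiability in t
  have hdiffT : ∀ (f : ℝ × (Fin n → ℝ) → Fin d → ℝ),
      ContDiffOn ℝ 1 f (Set.Ioo (0 : ℝ) δ ×ˢ (Set.univ : Set (Fin n → ℝ))) →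
      DifferentiableAt ℝ (fun s => f (s, p.2)) p.1 := by
    intro f hf
    have h1 : DifferentiableAt ℝ f (p.1, p.2) := by
      have := (hf.contDiffAt (hSopen.mem_nhds hp)).differentiableAt one_ne_zero
      simpa using this
    have h2 : DifferentiableAt ℝ (fun s : ℝ => ((s, p.2) : ℝ × (Fin n → ℝ))) p.1 :=
      differentiableAt_id.prodMk (differentiableAt_const _)
    exact h1.comp p.1 h2
  -- differentiability of coordinate update curve
  have hupdate : ∀ (a : Fin n),
      DifferentiableAt ℝ (fun s => Function.update p.2 a s) (p.2 a) := by
    intro a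
    rw [differentiableAt_pi]
    intro i
    simp only [Function.update_apply]
    by_cases hia : i = a
    · simp only [if_pos hia]; exact differentiableAt_id
    · simp only [if_neg hia]; exact differentiableAt_const _
  -- slice differentiability in x^a
  have hdiffX : ∀ (f : ℝ × (Fin n → ℝ) → Fin d → ℝ),
      ContDiffOn ℝ 1 f (Set.Ioo (0 : ℝ) δ ×ˢ (Set.univ : Set (Fin n → ℝ))) →
      ∀ a : Fin n, DifferentiableAt ℝ (fun s => f (p.1, Function.update p.2 a s)) (p.2 a) := by
    intro f hf a
    have h1 : DifferentiableAt ℝ f (p.1, Function.update p.2 a (p.2 a)) := by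
      rw [Function.update_eq_self]
      have := (hf.contDiffAt (hSopen.mem_nhds hp)).differentiableAt one_ne_zero
      simpa using this
    have h2 : DifferentiableAt ℝ
        (fun s : ℝ => ((p.1, Function.update p.2 a s) : ℝ × (Fin n → ℝ))) (p.2 a) :=
      (differentiableAt_const _).prodMk (hupdate a)
    exact h1.comp (p.2 a) h2
  -- pointwise form of (E₋₁)
  have hEm1' : ∀ q ∈ Set.Ioo (0 : ℝ) δ ×ˢ (Set.univ : Set (Fin n → ℝ)),
      Dop Um1 q = α • Um1 q + U0 q := by
    intro q hq
    have h1 := hEm1 q hq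
    have h2 : Dop Um1 q - (α • Um1 q + U0 q) = 0 := by
      rw [sub_add_eq_sub_sub]; exact h1
    exact sub_eq_zero.mp h2
  have key0 : Dop Um1 p = α • Um1 p + U0 p := hEm1' p hp
  have dUm1T := hdiffT Um1 (hUm1.of_le one_le_two)
  have dU0T := hdiffT U0 hU0
  -- D(Du) = α Du + D U0
  have key2 : Dop (Dop Um1) p = α • Dop Um1 p + Dop U0 p := by
    have hevent : (fun s => Dop Um1 (s, p.2)) =ᶠ[nhds p.1]
        (fun s => α • Um1 (s, p.2) + U0 (s, p.2)) := by
      filter_upwards [isOpen_Ioo.mem_nhds hpt] with s hs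
      exact hEm1' (s, p.2) (Set.mem_prod.mpr ⟨hs, trivial⟩)
    show p.1 • deriv (fun s => Dop Um1 (s, p.2)) p.1 = α • Dop Um1 p + Dop U0 p
    rw [hevent.deriv_eq, deriv_fun_add (f := fun s => α • Um1 (s, p.2)) (dUm1T.const_smul α) dU0T, deriv_fun_const_smul α dUm1T,
      smul_add, smul_comm]
    rfl
  -- t ∂ₐ(Du) = α Uₐ + t ∂ₐ U0
  have key3 : ∀ a : Fin n, p.1 • pd a (Dop Um1) p = α • UA a p + p.1 • pd a U0 p := by
    intro a
    have hfun : (fun s => Dop Um1 (p.1, Function.update p.2 a s))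
        = fun s => α • Um1 (p.1, Function.update p.2 a s)
            + U0 (p.1, Function.update p.2 a s) := by
      funext s
      exact hEm1' _ (Set.mem_prod.mpr ⟨hpt, trivial⟩)
    have d1 := hdiffX Um1 (hUm1.of_le one_le_two) a
    have d2 := hdiffX U0 hU0 a
    show p.1 • deriv (fun s => Dop Um1 (p.1, Function.update p.2 a s)) (p.2 a)
        = α • UA a p + p.1 • pd a U0 p
    rw [hfun, deriv_fun_add (f := fun s => α • Um1 (p.1, Function.update p.2 a s)) (d1.const_smul α) d2, deriv_fun_const_smul α d1, smul_add, smul_comm,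
      hconstraint p hp a]
    rfl
  -- t² ∂ₐ∂ated : use constraint
  have key4 : ∀ a b : Fin n, (p.1) ^ 2 • pd a (pd b Um1) p = p.1 • pd a (UA b) p := by
    intro a b
    have hfun : (fun s => pd b Um1 (p.1, Function.update p.2 a s))
        = fun s => p.1⁻¹ • UA b (p.1, Function.update p.2 a s) := by
      funext s
      have hc := hconstraint (p.1, Function.update p.2 a s)
        (Set.mem_prod.mpr ⟨hpt, trivial⟩) b
      rw [hc, smul_smul, inv_mul_cancel₀ ht0, one_smul]
    have d3 := hdiffX (UA b) (hUA b) a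
    show (p.1) ^ 2 • deriv (fun s => pd b Um1 (p.1, Function.update p.2 a s)) (p.2 a)
        = p.1 • pd a (UA b) p
    rw [hfun, deriv_fun_const_smul _ d3, smul_smul,
      show p.1 ^ 2 * p.1⁻¹ = p.1 by rw [sq, mul_assoc, mul_inv_cancel₀ ht0, mul_one]]
    rfl
  -- rewrite the sums
  have hsum1 : ∑ a : Fin n, (2 * G0 a p) • (p.1 • pd a (Dop Um1) p)
      = ∑ a : Fin n, (2 * α * G0 a p) • UA a p
        + ∑ a : Fin n, (2 * G0 a p) • (p.1 • pd a U0 p) := by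
    rw [← Finset.sum_add_distrib]
    refine Finset.sum_congr rfl fun a _ => ?_
    rw [key3 a]
    module
  have hsum2 : ∑ a : Fin n, ∑ b : Fin n, G a b p • ((p.1) ^ 2 • pd a (pd b Um1) p)
      = ∑ a : Fin n, ∑ b : Fin n, G a b p • (p.1 • pd a (UA b) p) := by
    refine Finset.sum_congr rfl fun a _ => Finset.sum_congr rfl fun b _ => ?_
    rw [key4 a b]
  rw [key2, hsum1, hsum2, key0]
  linear_combination (norm := module) hE0 p hp
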